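/- Let Φ : X × Y → ℝ. Then the maximum over couplings π ∈ M(p,q) of Σ_{x,y} π(x,y) Φ(x,y) is attained and equals the infimum, over all pairs of functions u : X → ℝ and v : Y → ℝ satisfying u(x) + v(y) ≥ Φ(x,y) for all (x,y), of Σ_x p(x) u(x) + Σ_y q(y) v(y). -/

import Mathlib

open Finset Real

/-- A coupling of the probability mass functions `p` and `q`. -/
def IsCoupling {X Y : Type*} [Fintype X] [Fintype Y]
    (p : X → ℝ) (q : Y → ℝ) (μ : X × Y → ℝ) : Prop :=
  (∀ z, 0 ≤ μ z) ∧ (∀ x, ∑ y, μ (x, y) = p x) ∧ (∀ y, ∑ x, μ (x, y) = q y)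

/-- Mutual information of a coupling (with `0 log 0 = 0`, which holds since `Real.log 0 = 0`). -/
noncomputable def mutualInfo {X Y : Type*} [Fintype X] [Fintype Y]
    (p : X → ℝ) (q : Y → ℝ) (μ : X × Y → ℝ) : ℝ :=
  ∑ x, ∑ y, μ (x, y) * Real.log (μ (x, y) / (p x * q y))

/-- Shannon entropy of a probability mass function. -/
noncomputable def entropy {Z : Type*} [Fintype Z] (p : Z → ℝ) : ℝ :=
  -∑ z, p z * Real.log (p z)

lemma sum_marg_aux {X Y : Type*} [Fintype X] [Fintype Y] (μ : X × Y → ℝ) (u : X → ℝ) (v : Y → ℝ) :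
    ∑ x, ∑ y, μ (x, y) * (u x + v y)
      = ∑ x, (∑ y, μ (x, y)) * u x + ∑ y, (∑ x, μ (x, y)) * v y := by
  simp_rw [mul_add, Finset.sum_add_distrib, Finset.sum_mul]
  congr 1
  exact Finset.sum_comm

lemma f_rep_aux {ι : Type*} [Fintype ι] [DecidableEq ι] (f : (ι → ℝ) →L[ℝ] ℝ) (w : ι → ℝ) :
    f w = ∑ i, w i * f (Pi.single i 1) := by
  conv_lhs => rw [pi_eq_sum_univ w]
  rw [map_sum]
  refine Finset.sum_congr rfl fun i _ => ?_
  have h : (fun j => if i = j then (1:ℝ) else 0) = Pi.single i 1 := by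
    funext j; simp [Pi.single_apply, eq_comm]
  rw [h, map_smul, smul_eq_mul]

theorem kantorovich_duality_discrete
    {X Y : Type*} [Fintype X] [Fintype Y] [Nonempty X] [Nonempty Y]
    (p : X → ℝ) (q : Y → ℝ) (hp : ∀ x, 0 < p x) (hq : ∀ y, 0 < q y)
    (hps : ∑ x, p x = 1) (hqs : ∑ y, q y = 1) (Φ : X × Y → ℝ) :
    ∃ M : ℝ,
      IsGreatest {m : ℝ | ∃ μ : X × Y → ℝ, IsCoupling p q μ ∧
          m = ∑ x, ∑ y, μ (x, y) * Φ (x, y)} M ∧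
      sInf {s : ℝ | ∃ (u : X → ℝ) (v : Y → ℝ),
          (∀ x y, Φ (x, y) ≤ u x + v y) ∧
          s = ∑ x, p x * u x + ∑ y, q y * v y} = M := by
  classical
  set L : ((X × Y) → ℝ) → ℝ := fun μ => ∑ x, ∑ y, μ (x, y) * Φ (x, y) with hLdef
  set C : Set ((X × Y) → ℝ) := {μ | IsCoupling p q μ} with hCdef
  have hCne : C.Nonempty := by
    refine ⟨fun z => p z.1 * q z.2, fun z => le_of_lt (mul_pos (hp z.1) (hq z.2)), ?_, ?_⟩
    · intro x
      show ∑ y, p x * q y = p x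
      rw [← Finset.mul_sum, hqs, mul_one]
    · intro y
      show ∑ x, p x * q y = q y
      rw [← Finset.sum_mul, hps, one_mul]
  have hCcl : IsClosed C := by
    have : C = (⋂ z, {μ : (X × Y) → ℝ | 0 ≤ μ z}) ∩
        ((⋂ x, {μ : (X × Y) → ℝ | ∑ y, μ (x, y) = p x}) ∩
         (⋂ y, {μ : (X × Y) → ℝ | ∑ x, μ (x, y) = q y})) := by
      ext μ
      simp [hCdef, IsCoupling, Set.mem_iInter, and_assoc]
    rw [this]
    refine IsClosed.inter (isClosed_iInter fun z =>
        isClosed_le continuous_const (continuous_apply z)) (IsClosed.inter ?_ ?_)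
    · exact isClosed_iInter fun x => isClosed_eq
        (continuous_finset_sum _ fun y _ => continuous_apply _) continuous_const
    · exact isClosed_iInter fun y => isClosed_eq
        (continuous_finset_sum _ fun x _ => continuous_apply _) continuous_const
  have hCbd : Bornology.IsBounded C := by
    refine (Metric.isBounded_closedBall (x := (0 : (X × Y) → ℝ)) (r := 1)).subset ?_
    intro μ hμ
    obtain ⟨hnn, hmx, hmy⟩ := hμ
    rw [Metric.mem_closedBall, dist_pi_le_iff zero_le_one]
    intro z
    rw [Real.dist_eq, Pi.zero_apply, sub_zero, abs_le]
    constructor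
    · linarith [hnn z]
    · have h1 : μ z ≤ ∑ y, μ (z.1, y) :=
        Finset.single_le_sum (fun y _ => hnn (z.1, y)) (Finset.mem_univ z.2)
      have h2 : p z.1 ≤ ∑ x, p x :=
        Finset.single_le_sum (fun x _ => (hp x).le) (Finset.mem_univ z.1)
      rw [hmx z.1] at h1
      linarith [hps ▸ h2]
  have hCcp : IsCompact C := Metric.isCompact_of_isClosed_isBounded hCcl hCbd
  have hLcont : Continuous L :=
    continuous_finset_sum _ fun x _ => continuous_finset_sum _ fun y _ =>
      (continuous_apply (x, y)).mul continuous_const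
  obtain ⟨μ₀, hμ₀C, hmax⟩ := hCcp.exists_isMaxOn hCne hLcont.continuousOn
  set M := L μ₀ with hMdef
  have weak : ∀ μ ∈ C, ∀ (u : X → ℝ) (v : Y → ℝ), (∀ x y, Φ (x, y) ≤ u x + v y) →
      L μ ≤ ∑ x, p x * u x + ∑ y, q y * v y := by
    intro μ hμ u v huv
    obtain ⟨hnn, hmx, hmy⟩ := hμ
    have step1 : L μ ≤ ∑ x, ∑ y, μ (x, y) * (u x + v y) := by
      refine Finset.sum_le_sum fun x _ => Finset.sum_le_sum fun y _ => ?_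
      exact mul_le_mul_of_nonneg_left (huv x y) (hnn (x, y))
    rw [sum_marg_aux] at step1
    calc L μ ≤ _ := step1
      _ = ∑ x, p x * u x + ∑ y, q y * v y := by
          congr 1
          · exact Finset.sum_congr rfl fun x _ => by rw [hmx x]
          · exact Finset.sum_congr rfl fun y _ => by rw [hmy y]
  have key : ∀ ε : ℝ, 0 < ε → ∃ (u : X → ℝ) (v : Y → ℝ),
      (∀ x y, Φ (x, y) ≤ u x + v y) ∧ ∑ x, p x * u x + ∑ y, q y * v y ≤ M + ε := by
    intro ε hε
    set S : Set ((X × Y) → ℝ) := {w | ∀ z, Φ z < w z} with hSdef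
    set T : Set ((X × Y) → ℝ) := {w | ∃ u : X → ℝ, ∃ v : Y → ℝ,
        (∀ z : X × Y, w z = u z.1 + v z.2) ∧
        ∑ x, p x * u x + ∑ y, q y * v y = M + ε} with hTdef
    by_cases hST : (S ∩ T).Nonempty
    · obtain ⟨w, hwS, u, v, hw, hval⟩ := hST
      exact ⟨u, v, fun x y => le_of_lt ((hw (x, y)) ▸ hwS (x, y)), le_of_eq hval⟩
    exfalso
    have hdisj : Disjoint S T := Set.disjoint_left.mpr fun w hwS hwT => hST ⟨w, hwS, hwT⟩
    have hSconv : Convex ℝ S := by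
      intro w1 h1 w2 h2 a b ha hb hab
      intro z
      simp only [Pi.add_apply, Pi.smul_apply, smul_eq_mul]
      rcases eq_or_lt_of_le ha with h | h
      · have hb1 : b = 1 := by linarith
        rw [← h, hb1]
        simpa using h2 z
      · have hA1 := mul_lt_mul_of_pos_left (h1 z) h
        have hB1 := mul_le_mul_of_nonneg_left (le_of_lt (h2 z)) hb
        have hsum : a * Φ z + b * Φ z = Φ z := by rw [← add_mul, hab, one_mul]
        linarith
    have hSopen : IsOpen S := by
      have hSeq : S = ⋂ z, {w : (X × Y) → ℝ | Φ z < w z} := by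
        ext w
        simp [hSdef, Set.mem_iInter]
      rw [hSeq]
      exact isOpen_iInter_of_finite fun z => isOpen_lt continuous_const (continuous_apply z)
    have hTconv : Convex ℝ T := by
      rintro w1 ⟨u1, v1, h1, hs1⟩ w2 ⟨u2, v2, h2, hs2⟩ a b ha hb hab
      refine ⟨a • u1 + b • u2, a • v1 + b • v2, fun z => ?_, ?_⟩
      · simp only [Pi.add_apply, Pi.smul_apply, smul_eq_mul, h1 z, h2 z]
        ring
      · have e1 : ∑ x, p x * ((a • u1 + b • u2) x)
            = a * ∑ x, p x * u1 x + b * ∑ x, p x * u2 x := by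
          rw [Finset.mul_sum, Finset.mul_sum, ← Finset.sum_add_distrib]
          exact Finset.sum_congr rfl fun x _ => by
            simp only [Pi.add_apply, Pi.smul_apply, smul_eq_mul]; ring
        have e2 : ∑ y, q y * ((a • v1 + b • v2) y)
            = a * ∑ y, q y * v1 y + b * ∑ y, q y * v2 y := by
          rw [Finset.mul_sum, Finset.mul_sum, ← Finset.sum_add_distrib]
          exact Finset.sum_congr rfl fun y _ => by
            simp only [Pi.add_apply, Pi.smul_apply, smul_eq_mul]; ring
        rw [e1, e2]
        linear_combination a * hs1 + b * hs2 + (M + ε) * hab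
    obtain ⟨f, c, hfS, hfT⟩ := geometric_hahn_banach_open hSconv hSopen hTconv hdisj
    set A : X × Y → ℝ := fun z => f (Pi.single z 1) with hAdef
    have frep : ∀ w : (X × Y) → ℝ, f w = ∑ z, w z * A z := fun w => f_rep_aux f w
    have hΦδ : ∀ δ : ℝ, 0 < δ → (fun z => Φ z + δ) ∈ S :=
      fun δ hδ z => lt_add_of_pos_right (Φ z) hδ
    have hwT : (fun _ : X × Y => M + ε) ∈ T := by
      refine ⟨fun _ => M + ε, fun _ => 0, fun z => by ring, ?_⟩
      simp only [mul_zero, Finset.sum_const_zero, add_zero]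
      rw [← Finset.sum_mul, hps, one_mul]
    have hA : ∀ z, A z ≤ 0 := by
      intro z₀
      by_contra hpos
      push_neg at hpos
      have hfc : f (fun z => Φ z + 1) < c := hfS _ (hΦδ 1 one_pos)
      set t := (c - f (fun z => Φ z + 1)) / A z₀ with htdef
      have ht : 0 < t := div_pos (by linarith) hpos
      have hmem : ((fun z => Φ z + 1) + t • (Pi.single z₀ 1 : (X × Y) → ℝ)) ∈ S := by
        intro z
        simp only [Pi.add_apply, Pi.smul_apply, smul_eq_mul]
        have h0 : 0 ≤ (Pi.single z₀ 1 : (X × Y) → ℝ) z := by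
          rcases eq_or_ne z z₀ with h | h <;> simp [Pi.single_apply, h]
        nlinarith [mul_nonneg ht.le h0]
      have hlt := hfS _ hmem
      rw [map_add, map_smul, smul_eq_mul] at hlt
      have hcan : t * A z₀ = c - f (fun z => Φ z + 1) :=
        div_mul_cancel₀ _ (ne_of_gt hpos)
      have hlt' : f (fun z => Φ z + 1) + t * A z₀ < c := hlt
      linarith
    have hB : ∀ (u : X → ℝ) (v : Y → ℝ), ∑ x, p x * u x + ∑ y, q y * v y = 0 →
        f (fun z : X × Y => u z.1 + v z.2) = 0 := by
      intro u v huv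
      by_contra hne
      have hfT' : ∀ t : ℝ,
          c ≤ f (fun _ : X × Y => M + ε) + t * f (fun z : X × Y => u z.1 + v z.2) := by
        intro t
        have hmem : ((fun _ : X × Y => M + ε) + t • (fun z : X × Y => u z.1 + v z.2)) ∈ T := by
          refine ⟨fun x => M + ε + t * u x, fun y => t * v y, fun z => by
            simp only [Pi.add_apply, Pi.smul_apply, smul_eq_mul]; ring, ?_⟩
          have e1 : ∑ x, p x * (M + ε + t * u x) = (M + ε) + t * ∑ x, p x * u x := by
            calc ∑ x, p x * (M + ε + t * u x)
                = ∑ x, (p x * (M + ε) + t * (p x * u x)) :=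
                  Finset.sum_congr rfl fun x _ => by ring
              _ = (∑ x, p x) * (M + ε) + t * ∑ x, p x * u x := by
                  rw [Finset.sum_add_distrib, ← Finset.sum_mul, ← Finset.mul_sum]
              _ = (M + ε) + t * ∑ x, p x * u x := by rw [hps, one_mul]
          have e2 : ∑ y, q y * (t * v y) = t * ∑ y, q y * v y := by
            rw [Finset.mul_sum]
            exact Finset.sum_congr rfl fun y _ => by ring
          rw [e1, e2]
          linear_combination t * huv
        have hh := hfT _ hmem
        rwa [map_add, map_smul, smul_eq_mul] at hh
      have hinst := hfT' ((c - 1 - f (fun _ : X × Y => M + ε)) / f (fun z : X × Y => u z.1 + v z.2))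
      rw [div_mul_cancel₀ _ hne] at hinst
      linarith
    set R : X → ℝ := fun x => ∑ y, A (x, y) with hRdef
    set CC : Y → ℝ := fun y => ∑ x, A (x, y) with hCCdef
    set Λ : ℝ := ∑ z : X × Y, A z with hΛdef
    have hΛR : ∑ x, R x = Λ := by rw [hΛdef, Fintype.sum_prod_type]
    have hΛC : ∑ y, CC y = Λ := by rw [hΛdef, Fintype.sum_prod_type_right]
    have hfuv : ∀ (u : X → ℝ) (v : Y → ℝ),
        f (fun z : X × Y => u z.1 + v z.2) = ∑ x, R x * u x + ∑ y, CC y * v y := by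
      intro u v
      rw [frep, Fintype.sum_prod_type, ← sum_marg_aux A u v]
      exact Finset.sum_congr rfl fun x _ => Finset.sum_congr rfl fun y _ => by
        dsimp
        ring
    have hR : ∀ x', R x' = Λ * p x' := by
      intro x'
      have hzero : ∑ x, p x * ((if x = x' then (p x')⁻¹ else 0) - 1) + ∑ y, q y * (0 : ℝ) = 0 := by
        have e : ∑ x, p x * ((if x = x' then (p x')⁻¹ else 0) - 1)
            = ∑ x, ((if x = x' then p x * (p x')⁻¹ else 0) - p x) :=
          Finset.sum_congr rfl fun x _ => by
            rcases eq_or_ne x x' with h | h <;> simp [h] <;> ring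
        rw [e, Finset.sum_sub_distrib, Finset.sum_ite_eq' Finset.univ x' (fun x => p x * (p x')⁻¹)]
        simp [hps, mul_inv_cancel₀ (hp x').ne']
      have h0 := hB (fun x => (if x = x' then (p x')⁻¹ else 0) - 1) (fun _ => (0 : ℝ)) hzero
      rw [hfuv (fun x => (if x = x' then (p x')⁻¹ else 0) - 1) (fun _ => (0 : ℝ))] at h0
      have e2 : ∑ x, R x * ((if x = x' then (p x')⁻¹ else 0) - 1)
          = R x' * (p x')⁻¹ - Λ := by
        have e : ∑ x, R x * ((if x = x' then (p x')⁻¹ else 0) - 1)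
            = ∑ x, ((if x = x' then R x * (p x')⁻¹ else 0) - R x) :=
          Finset.sum_congr rfl fun x _ => by
            rcases eq_or_ne x x' with h | h <;> simp [h] <;> ring
        rw [e, Finset.sum_sub_distrib, Finset.sum_ite_eq' Finset.univ x' (fun x => R x * (p x')⁻¹),
          hΛR]
        simp
      rw [e2] at h0
      simp only [mul_zero, Finset.sum_const_zero, add_zero] at h0
      have h1 : R x' * (p x')⁻¹ = Λ := by linarith
      have h2 : R x' * (p x')⁻¹ * p x' = Λ * p x' := by rw [h1]
      rwa [mul_assoc, inv_mul_cancel₀ (hp x').ne', mul_one] at h2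
    have hCc : ∀ y', CC y' = Λ * q y' := by
      intro y'
      have hzero : ∑ x, p x * (0 : ℝ) + ∑ y, q y * ((if y = y' then (q y')⁻¹ else 0) - 1) = 0 := by
        have e : ∑ y, q y * ((if y = y' then (q y')⁻¹ else 0) - 1)
            = ∑ y, ((if y = y' then q y * (q y')⁻¹ else 0) - q y) :=
          Finset.sum_congr rfl fun y _ => by
            rcases eq_or_ne y y' with h | h <;> simp [h] <;> ring
        rw [e, Finset.sum_sub_distrib, Finset.sum_ite_eq' Finset.univ y' (fun y => q y * (q y')⁻¹)]
        simp [hqs, mul_inv_cancel₀ (hq y').ne']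
      have h0 := hB (fun _ => (0 : ℝ)) (fun y => (if y = y' then (q y')⁻¹ else 0) - 1) hzero
      rw [hfuv (fun _ => (0 : ℝ)) (fun y => (if y = y' then (q y')⁻¹ else 0) - 1)] at h0
      have e2 : ∑ y, CC y * ((if y = y' then (q y')⁻¹ else 0) - 1)
          = CC y' * (q y')⁻¹ - Λ := by
        have e : ∑ y, CC y * ((if y = y' then (q y')⁻¹ else 0) - 1)
            = ∑ y, ((if y = y' then CC y * (q y')⁻¹ else 0) - CC y) :=
          Finset.sum_congr rfl fun y _ => by
            rcases eq_or_ne y y' with h | h <;> simp [h] <;> ring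
        rw [e, Finset.sum_sub_distrib, Finset.sum_ite_eq' Finset.univ y' (fun y => CC y * (q y')⁻¹),
          hΛC]
        simp
      rw [e2] at h0
      simp only [mul_zero, Finset.sum_const_zero, zero_add] at h0
      have h1 : CC y' * (q y')⁻¹ = Λ := by linarith
      have h2 : CC y' * (q y')⁻¹ * q y' = Λ * q y' := by rw [h1]
      rwa [mul_assoc, inv_mul_cancel₀ (hq y').ne', mul_one] at h2
    have hΛle : Λ ≤ 0 := Finset.sum_nonpos fun z _ => hA z
    have hc : c ≤ (M + ε) * Λ := by
      have hh := hfT _ hwT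
      rw [frep] at hh
      calc c ≤ ∑ z : X × Y, (M + ε) * A z := hh
        _ = (M + ε) * Λ := by rw [← Finset.mul_sum]
    rcases eq_or_lt_of_le hΛle with hΛ0 | hΛneg
    · have hAz : ∀ z ∈ Finset.univ, A z = 0 :=
        (Finset.sum_eq_zero_iff_of_nonpos (fun z _ => hA z)).mp (hΛdef ▸ hΛ0)
      have hf0 : ∀ w : (X × Y) → ℝ, f w = 0 := fun w => by
        rw [frep]
        exact Finset.sum_eq_zero fun z hz => by rw [hAz z hz, mul_zero]
      have h1 := hfS _ (hΦδ 1 one_pos)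
      have h2 := hfT _ hwT
      rw [hf0] at h1
      rw [hf0] at h2
      linarith
    · set μ' : X × Y → ℝ := fun z => A z / Λ with hμ'def
      have hμ'C : μ' ∈ C := by
        refine ⟨fun z => div_nonneg_of_nonpos (hA z) hΛneg.le, ?_, ?_⟩
        · intro x
          show ∑ y, A (x, y) / Λ = p x
          rw [← Finset.sum_div]
          rw [show ∑ y, A (x, y) = R x from rfl, hR x,
            mul_div_cancel_left₀ _ (ne_of_lt hΛneg)]
        · intro y
          show ∑ x, A (x, y) / Λ = q y
          rw [← Finset.sum_div]
          rw [show ∑ x, A (x, y) = CC y from rfl, hCc y,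
            mul_div_cancel_left₀ _ (ne_of_lt hΛneg)]
      have hLle : L μ' ≤ M := hmax hμ'C
      have hfΦval : f Φ = Λ * L μ' := by
        rw [frep, Fintype.sum_prod_type, hLdef]
        rw [Finset.mul_sum]
        refine Finset.sum_congr rfl fun x _ => ?_
        rw [Finset.mul_sum]
        refine Finset.sum_congr rfl fun y _ => ?_
        show Φ (x, y) * A (x, y) = Λ * (A (x, y) / Λ * Φ (x, y))
        field_simp
        rw [mul_div_cancel_right₀ _ (ne_of_lt hΛneg)]
      have hfΦc : f Φ ≤ c := by
        by_contra hgt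
        push_neg at hgt
        set δ := (f Φ - c) / (-Λ) with hδdef
        have hδpos : 0 < δ := div_pos (by linarith) (by linarith)
        have hlt := hfS _ (hΦδ δ hδpos)
        have heq : (fun z => Φ z + δ) = Φ + δ • (fun _ : X × Y => (1 : ℝ)) := by
          funext z
          simp
        rw [heq, map_add, map_smul, smul_eq_mul] at hlt
        have hone : f (fun _ : X × Y => (1 : ℝ)) = Λ := by
          rw [frep, show (Λ : ℝ) = ∑ z : X × Y, A z from hΛdef]
          simp only [one_mul]
        rw [hone] at hlt
        have hδΛ : δ * Λ = c - f Φ := by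
          rw [hδdef, div_mul_eq_mul_div, div_neg, mul_div_cancel_right₀ _ (ne_of_lt hΛneg),
            neg_sub]
        linarith
      nlinarith [mul_nonneg (sub_nonneg.mpr hLle) (neg_nonneg.mpr hΛneg.le),
        mul_pos hε (neg_pos.mpr hΛneg)]

  refine ⟨M, ⟨⟨μ₀, hμ₀C, rfl⟩, ?_⟩, ?_⟩
  · rintro m ⟨μ, hμ, rfl⟩
    exact hmax hμ
  · apply le_antisymm
    · have hbdd : BddBelow {s : ℝ | ∃ (u : X → ℝ) (v : Y → ℝ),
          (∀ x y, Φ (x, y) ≤ u x + v y) ∧ s = ∑ x, p x * u x + ∑ y, q y * v y} := by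
        refine ⟨M, ?_⟩
        rintro s ⟨u, v, huv, rfl⟩
        exact weak μ₀ hμ₀C u v huv
      refine le_of_forall_pos_le_add fun ε hε => ?_
      obtain ⟨u, v, huv, hval⟩ := key ε hε
      exact le_trans (csInf_le hbdd ⟨u, v, huv, rfl⟩) hval
    · obtain ⟨u₁, v₁, hfe₁, _⟩ := key 1 one_pos
      refine le_csInf ⟨_, u₁, v₁, hfe₁, rfl⟩ ?_
      rintro s ⟨u, v, huv, rfl⟩
      exact weak μ₀ hμ₀C u v huv
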